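/- Let 𝒞 be a compact subset of ℝⁿ with C = conv(𝒞) satisfying hypotheses (H1), (H2), (H3). Let ε_ν ↘ 0, let 𝒜_{ε_ν} ⊆ 𝒞 be ε_ν-approximations of 𝒞 and A_{ε_ν} = conv(𝒜_{ε_ν}). If {F_{ε_ν}} is a sequence of nonempty proper exposed faces of the polytopes A_{ε_ν} converging in Hausdorff distance to a set F, then F is a proper face of C (a nonempty convex extreme subset of C different from C). -/

import Mathlib

open Metric Set Filter
open scoped RealInnerProductSpace

/-- distance between convex combinations -/
lemma combo_dist_aux {E : Type*} [NormedAddCommGroup E] [NormedSpace ℝ E]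
    (x y p q : E) {a b : ℝ} (ha : 0 ≤ a) (hb : 0 ≤ b) :
    dist (a • x + b • y) (a • p + b • q) ≤ a * dist x p + b * dist y q := by
  have h1 : a • x + b • y - (a • p + b • q) = a • (x - p) + b • (y - q) := by
    rw [smul_sub, smul_sub]; abel
  rw [dist_eq_norm, h1, dist_eq_norm, dist_eq_norm]
  refine (norm_add_le _ _).trans ?_
  rw [norm_smul, norm_smul, Real.norm_eq_abs, Real.norm_eq_abs, abs_of_nonneg ha,
    abs_of_nonneg hb]

/-- Face extraction: if a "linear" functional attains its max `m` over `P` at `x ∈ conv P`,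
then `x` lies in the convex hull of the points of `P` where the max is attained. -/
lemma face_cut_aux {E : Type*} [AddCommGroup E] [Module ℝ E] (P : Set E) (f : E → ℝ)
    (hf : ∀ (a b : ℝ) (x y : E), f (a • x + b • y) = a * f x + b * f y)
    (m : ℝ) (hub : ∀ p ∈ P, f p ≤ m) {x : E} (hx : x ∈ convexHull ℝ P) (hm : f x = m) :
    x ∈ convexHull ℝ (P ∩ {y | f y = m}) := by
  set D : Set E := {z | f z ≤ m ∧ (f z = m → z ∈ convexHull ℝ (P ∩ {y | f y = m}))} with hD
  have hsub : convexHull ℝ P ⊆ D := by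
    apply convexHull_min
    · intro p hp
      exact ⟨hub p hp, fun hpm => subset_convexHull ℝ _ ⟨hp, hpm⟩⟩
    · intro u hu v hv a b ha hb hab
      have hfc : f (a • u + b • v) = a * f u + b * f v := hf a b u v
      have e1 : a * f u ≤ a * m := mul_le_mul_of_nonneg_left hu.1 ha
      have e2 : b * f v ≤ b * m := mul_le_mul_of_nonneg_left hv.1 hb
      have e3 : a * m + b * m = m := by rw [← add_mul, hab, one_mul]
      constructor
      · rw [hfc]; linarith
      · intro heq
        rw [hfc] at heq
        rcases eq_or_lt_of_le ha with rfl | ha'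
        · have hb1 : b = 1 := by linarith
          have hfv : f v = m := by
            rw [hb1] at heq; linarith
          rw [hb1]
          simpa using hv.2 hfv
        rcases eq_or_lt_of_le hb with rfl | hb'
        · have ha1 : a = 1 := by linarith
          have hfu : f u = m := by
            rw [ha1] at heq; linarith
          rw [ha1]
          simpa using hu.2 hfu
        · have hfu : f u = m := mul_left_cancel₀ ha'.ne' (by linarith)
          have hfv : f v = m := mul_left_cancel₀ hb'.ne' (by linarith)
          exact (convex_convexHull ℝ _) (hu.2 hfu) (hv.2 hfv) ha hb hab
  exact (hsub hx).2 hm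

lemma unique_weights_aux {E : Type*} [AddCommGroup E] [Module ℝ E] {ι : Type*} [Fintype ι]
    {p : ι → E} (h : AffineIndependent ℝ p) {w1 w2 : ι → ℝ}
    (h1 : ∑ i, w1 i = 1) (h2 : ∑ i, w2 i = 1)
    (he : ∑ i, w1 i • p i = ∑ i, w2 i • p i) : w1 = w2 := by
  have hA : Finset.univ.affineCombination ℝ p w1 = Finset.univ.affineCombination ℝ p w2 := by
    rw [affineCombination_eq_centerMass h1, affineCombination_eq_centerMass h2,
      Finset.centerMass_eq_of_sum_1 _ _ h1, Finset.centerMass_eq_of_sum_1 _ _ h2]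
    exact he
  have := h.indicator_eq_of_affineCombination_eq Finset.univ Finset.univ w1 w2 h1 h2 hA
  simpa [Finset.coe_univ, Set.indicator_univ] using this

lemma rep_exists_aux {E : Type*} [AddCommGroup E] [Module ℝ E] {V T : Set E} [Fintype V]
    (hTV : T ⊆ V) {x : E} (hx : x ∈ convexHull ℝ T) :
    ∃ w : V → ℝ, (∀ i, 0 ≤ w i) ∧ ∑ i, w i = 1 ∧ (∀ i : V, (i : E) ∉ T → w i = 0) ∧
      ∑ i, w i • (i : E) = x := by
  classical
  have hsub : convexHull ℝ T ⊆ {z : E | ∃ w : V → ℝ, (∀ i, 0 ≤ w i) ∧ ∑ i, w i = 1 ∧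
      (∀ i : V, (i : E) ∉ T → w i = 0) ∧ ∑ i, w i • (i : E) = z} := by
    apply convexHull_min
    · intro t ht
      refine ⟨fun i => if i = ⟨t, hTV ht⟩ then 1 else 0, ?_, ?_, ?_, ?_⟩
      · intro i; dsimp only; split <;> norm_num
      · simp
      · intro i hi
        dsimp only
        split
        · next h => exact absurd (h ▸ ht : (i : E) ∈ T) hi
        · rfl
      · simp [ite_smul]
    · intro u hu v hv a b ha hb hab
      obtain ⟨w1, h10, h11, h1s, h1x⟩ := hu
      obtain ⟨w2, h20, h21, h2s, h2x⟩ := hv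
      refine ⟨fun i => a * w1 i + b * w2 i, ?_, ?_, ?_, ?_⟩
      · intro i; dsimp only; have := h10 i; have := h20 i; positivity
      · rw [Finset.sum_add_distrib, ← Finset.mul_sum, ← Finset.mul_sum, h11, h21]
        simpa using hab
      · intro i hi; dsimp only; rw [h1s i hi, h2s i hi]; ring
      · rw [← h1x, ← h2x, Finset.smul_sum, Finset.smul_sum, ← Finset.sum_add_distrib]
        refine Finset.sum_congr rfl fun i _ => ?_
        rw [add_smul, mul_smul, mul_smul]
  exact hsub hx

lemma mem_hull_of_weights_aux {E : Type*} [AddCommGroup E] [Module ℝ E] {V T : Set E}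
    [Fintype V] (w : V → ℝ) (hw0 : ∀ i, 0 ≤ w i) (hw1 : ∑ i, w i = 1)
    (hsup : ∀ i : V, (i : E) ∉ T → w i = 0) :
    ∑ i, w i • (i : E) ∈ convexHull ℝ T := by
  classical
  have h1 : Finset.univ.centerMass w (fun i : V => (i : E)) = ∑ i, w i • (i : E) :=
    Finset.centerMass_eq_of_sum_1 _ _ hw1
  rw [← h1, ← Finset.centerMass_filter_ne_zero]
  apply Finset.centerMass_mem_convexHull
  · intro i _; exact hw0 i
  · rw [Finset.sum_filter_ne_zero, hw1]; norm_num
  · intro i hi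
    rw [Finset.mem_filter] at hi
    by_contra hiT
    exact hi.2 (hsup i hiT)

/-- A sub-hull of a simplex is a face of the simplex. -/
lemma simplex_face_aux {E : Type*} [AddCommGroup E] [Module ℝ E] {V T : Set E} (hV : V.Finite)
    (hind : AffineIndependent ℝ ((↑) : V → E)) (hTV : T ⊆ V) :
    IsExtreme ℝ (convexHull ℝ V) (convexHull ℝ T) := by
  classical
  haveI := hV.fintype
  constructor
  · exact convexHull_mono hTV
  · intro x1 hx1 x2 hx2 z hz hseg
    obtain ⟨w1, h10, h11, _, h1x⟩ := rep_exists_aux (le_refl V) hx1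
    obtain ⟨w2, h20, h21, _, h2x⟩ := rep_exists_aux (le_refl V) hx2
    obtain ⟨wz, hz0, hz1, hzs, hzx⟩ := rep_exists_aux hTV hz
    obtain ⟨a, b, ha, hb, hab, habz⟩ := hseg
    have hsum : ∑ i, (a * w1 i + b * w2 i) = 1 := by
      rw [Finset.sum_add_distrib, ← Finset.mul_sum, ← Finset.mul_sum, h11, h21]
      simpa using hab
    have hkey : wz = fun i => a * w1 i + b * w2 i := by
      apply unique_weights_aux hind hz1 hsum
      rw [hzx, ← habz, ← h1x, ← h2x, Finset.smul_sum, Finset.smul_sum,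
        ← Finset.sum_add_distrib]
      exact Finset.sum_congr rfl fun i _ => by rw [add_smul, mul_smul, mul_smul]
    have hsup : ∀ i : V, (i : E) ∉ T → w1 i = 0 ∧ w2 i = 0 := by
      intro i hi
      have h0 : a * w1 i + b * w2 i = 0 := by rw [← congrFun hkey i]; exact hzs i hi
      constructor <;> nlinarith [h10 i, h20 i]
    · rw [← h1x]; exact mem_hull_of_weights_aux w1 h10 h11 fun i hi => (hsup i hi).1

theorem main_aux
    {E : Type*} [NormedAddCommGroup E] [InnerProductSpace ℝ E] [FiniteDimensional ℝ E]
    (𝒞 : Set E) (h𝒞 : IsCompact 𝒞)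
    (C : Set E) (hC : C = convexHull ℝ 𝒞)
    (H1 : ∀ x ∈ 𝒞, x ∈ frontier C → x ∈ Set.extremePoints ℝ C)
    (H2 : ∀ G : Set E, IsExtreme ℝ C G →
      (∃ V : Set E, V.Finite ∧ G = convexHull ℝ V) →
      ∃ V : Set E, V.Finite ∧
        AffineIndependent ℝ ((↑) : V → E) ∧ G = convexHull ℝ V)
    (H3 : ∀ (l : E →L[ℝ] ℝ) (c : ℝ), l ≠ 0 → (𝒞 ∩ {x | l x = c}).Finite)
    (ε : ℕ → ℝ) (hεpos : ∀ ν, 0 < ε ν)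
    (hεlim : Filter.Tendsto ε Filter.atTop (nhds 0))
    (𝒜 : ℕ → Set E)
    (h𝒜fin : ∀ ν, (𝒜 ν).Finite) (h𝒜sub : ∀ ν, 𝒜 ν ⊆ 𝒞)
    (h𝒜approx : ∀ ν, ∀ y ∈ 𝒞, ∃ x ∈ 𝒜 ν, ‖y - x‖ ≤ ε ν)
    (A : ℕ → Set E)
    (hA : ∀ ν, A ν = convexHull ℝ (𝒜 ν))
    (F : ℕ → Set E)
    (hFne : ∀ ν, (F ν).Nonempty)
    (hFexp : ∀ ν, IsExposed ℝ (A ν) (F ν))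
    (hFprop : ∀ ν, F ν ≠ A ν)
    (Flim : Set E)
    (hFlne : Flim.Nonempty) (hFlcpt : IsCompact Flim)
    (hFconv : Filter.Tendsto (fun ν => Metric.hausdorffDist (F ν) Flim)
      Filter.atTop (nhds 0)) :
    Flim.Nonempty ∧ IsExtreme ℝ C Flim ∧ Flim ≠ C := by
  classical
  -- Basic facts
  have hCconv : Convex ℝ C := hC ▸ convex_convexHull ℝ 𝒞
  have hCbdd : Bornology.IsBounded C := by
    rw [hC]; exact isBounded_convexHull.2 h𝒞.isBounded
  have hAC : ∀ ν, A ν ⊆ C := fun ν => by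
    rw [hA ν, hC]; exact convexHull_mono (h𝒜sub ν)
  have hFsubA : ∀ ν, F ν ⊆ A ν := fun ν => (hFexp ν).subset
  have hFsubC : ∀ ν, F ν ⊆ C := fun ν => (hFsubA ν).trans (hAC ν)
  have h𝒜ne : ∀ ν, (𝒜 ν).Nonempty := by
    intro ν
    obtain ⟨x, hx⟩ := hFne ν
    have := hFsubA ν hx
    rw [hA ν] at this
    exact convexHull_nonempty_iff.1 ⟨x, this⟩
  have h𝒞ne : 𝒞.Nonempty := Set.Nonempty.mono (h𝒜sub 0) (h𝒜ne 0)
  -- Replace the exposing functionals by unit vectors in the direction space of `C`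
  have hexpW : ∀ ν, ∃ w : E, ‖w‖ = 1 ∧ w ∈ vectorSpan ℝ C ∧
      F ν = {x | x ∈ A ν ∧ ∀ y ∈ A ν, ⟪w, y⟫ ≤ ⟪w, x⟫} := by
    intro ν
    obtain ⟨l, hl⟩ := hFexp ν (hFne ν)
    have hnc : ∃ a ∈ A ν, ∃ b ∈ A ν, l b < l a := by
      by_contra hcon
      push_neg at hcon
      apply hFprop ν
      rw [hl]
      refine Set.Subset.antisymm (fun x hx => hx.1) fun x hx => ⟨hx, fun y hy => hcon y hy x hx⟩
    obtain ⟨a, haA, b, hbA, hab⟩ := hnc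
    set v : E := (InnerProductSpace.toDual ℝ E).symm l with hv
    have hvl : ∀ x, ⟪v, x⟫ = l x := fun x => InnerProductSpace.toDual_symm_apply
    set K := vectorSpan ℝ C with hK
    set w' : E := ↑(K.orthogonalProjectionOnto v) with hw'
    have hproj : ∀ d ∈ K, ⟪w', d⟫ = ⟪v, d⟫ := by
      intro d hd
      have horth := Submodule.sub_starProjection_mem_orthogonal (K := K) v
      have h0 : ⟪d, v - w'⟫ = 0 := horth d hd
      rw [inner_sub_right] at h0
      rw [real_inner_comm d w', real_inner_comm d v]
      linarith
    have hdiff : ∀ x ∈ C, ∀ y ∈ C, ⟪w', x⟫ - ⟪w', y⟫ = l x - l y := by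
      intro x hx y hy
      have hxy : x - y ∈ K := by
        simpa using vsub_mem_vectorSpan ℝ hx hy
      have h1 := hproj _ hxy
      rw [inner_sub_right, inner_sub_right] at h1
      rw [← hvl x, ← hvl y]
      linarith
    have hw'ne : w' ≠ 0 := by
      intro h0
      have h1 := hdiff a (hAC ν haA) b (hAC ν hbA)
      rw [h0] at h1
      simp only [inner_zero_left] at h1
      simp only [sub_zero, zero_sub] at h1
      linarith
    have hpos : 0 < ‖w'‖⁻¹ := inv_pos.2 (norm_pos_iff.2 hw'ne)
    refine ⟨‖w'‖⁻¹ • w', ?_, ?_, ?_⟩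
    · rw [norm_smul, norm_inv, norm_norm, inv_mul_cancel₀ (norm_ne_zero_iff.2 hw'ne)]
    · exact Submodule.smul_mem _ _ (SetLike.coe_mem _)
    · rw [hl]
      ext x
      simp only [Set.mem_setOf_eq]
      constructor
      · rintro ⟨hxA, hmax⟩
        refine ⟨hxA, fun y hy => ?_⟩
        have h1 := hdiff x (hAC ν hxA) y (hAC ν hy)
        have h2 : l y ≤ l x := hmax y hy
        rw [real_inner_smul_left, real_inner_smul_left]
        have h3 : ⟪w', y⟫ ≤ ⟪w', x⟫ := by linarith
        exact mul_le_mul_of_nonneg_left h3 hpos.le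
      · rintro ⟨hxA, hmax⟩
        refine ⟨hxA, fun y hy => ?_⟩
        have h1 := hdiff x (hAC ν hxA) y (hAC ν hy)
        have h2 := hmax y hy
        rw [real_inner_smul_left, real_inner_smul_left] at h2
        have h3 : ⟪w', y⟫ ≤ ⟪w', x⟫ := le_of_mul_le_mul_left h2 hpos
        linarith
  choose w hw1 hwW hwF using hexpW
  choose xb hxb using fun ν => hFne ν
  set m : ℕ → ℝ := fun ν => ⟪w ν, xb ν⟫ with hm
  set B : ℕ → Set E := fun ν => 𝒜 ν ∩ {y | ⟪w ν, y⟫ = m ν} with hB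
  have hxbF : ∀ ν, xb ν ∈ A ν ∧ ∀ y ∈ A ν, ⟪w ν, y⟫ ≤ ⟪w ν, xb ν⟫ := by
    intro ν
    have h := hxb ν
    rw [hwF ν] at h
    exact h
  have hmmax : ∀ ν, ∀ y ∈ A ν, ⟪w ν, y⟫ ≤ m ν := fun ν y hy => (hxbF ν).2 y hy
  have h𝒜A : ∀ ν, 𝒜 ν ⊆ A ν := fun ν => by
    rw [hA ν]; exact subset_convexHull ℝ _
  have hBF : ∀ ν, B ν ⊆ F ν := by
    intro ν y hy
    rw [hwF ν]
    exact ⟨h𝒜A ν hy.1, fun z hz => le_of_le_of_eq (hmmax ν z hz) hy.2.symm⟩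
  have hBfin : ∀ ν, (B ν).Finite := fun ν => (h𝒜fin ν).subset Set.inter_subset_left
  have hB𝒞 : ∀ ν, B ν ⊆ 𝒞 := fun ν => Set.inter_subset_left.trans (h𝒜sub ν)
  have hFcv : ∀ ν, Convex ℝ (F ν) := fun ν =>
    (hFexp ν).convex (by rw [hA ν]; exact convex_convexHull ℝ _)
  have hFeq : ∀ ν, F ν = convexHull ℝ (B ν) := by
    intro ν
    refine Set.Subset.antisymm ?_ (convexHull_min (hBF ν) (hFcv ν))
    intro x hx
    have hx' := hx
    rw [hwF ν] at hx'
    have hxval : ⟪w ν, x⟫ = m ν :=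
      le_antisymm (hmmax ν x hx'.1) (hx'.2 (xb ν) (hxbF ν).1)
    have hcut := face_cut_aux (𝒜 ν) (fun y => ⟪w ν, y⟫)
      (fun a b x' y' => by
        show ⟪w ν, a • x' + b • y'⟫ = a * ⟪w ν, x'⟫ + b * ⟪w ν, y'⟫
        rw [inner_add_right, real_inner_smul_right, real_inner_smul_right])
      (m ν) (fun p hp => hmmax ν p (h𝒜A ν hp)) (by rw [hA ν] at hx'; exact hx'.1) hxval
    exact hcut
  have hBne : ∀ ν, (B ν).Nonempty := by
    intro ν
    obtain ⟨x, hx⟩ := hFne ν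
    rw [hFeq ν] at hx
    exact convexHull_nonempty_iff.1 ⟨x, hx⟩
  -- extract a convergent subsequence of unit vectors
  have hwsph : ∀ ν, w ν ∈ Metric.sphere (0 : E) 1 := fun ν => by
    simp [mem_sphere_zero_iff_norm, hw1 ν]
  obtain ⟨wl, hwlsph, φ, hφ, hwconv⟩ := (isCompact_sphere (0 : E) 1).tendsto_subseq hwsph
  have hwl1 : ‖wl‖ = 1 := by simpa [mem_sphere_zero_iff_norm] using hwlsph
  have hwlW : wl ∈ vectorSpan ℝ C := by
    have hcl : IsClosed (vectorSpan ℝ C : Set E) := Submodule.closed_of_finiteDimensional _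
    exact hcl.mem_of_tendsto hwconv (Filter.Eventually.of_forall fun k => hwW (φ k))
  -- the maximum of ⟪wl, ·⟫ over 𝒞 and C
  obtain ⟨xs, hxs𝒞, hxsmax⟩ := h𝒞.exists_isMaxOn h𝒞ne
    ((continuous_const.inner continuous_id).continuousOn :
      ContinuousOn (fun x : E => ⟪wl, x⟫) 𝒞)
  set M : ℝ := ⟪wl, xs⟫ with hM
  have hM𝒞 : ∀ y ∈ 𝒞, ⟪wl, y⟫ ≤ M := fun y hy => hxsmax hy
  have hMC : ∀ y ∈ C, ⟪wl, y⟫ ≤ M := by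
    have hhalf : Convex ℝ {x : E | ⟪wl, x⟫ ≤ M} :=
      convex_halfSpace_le ⟨fun a b => inner_add_right _ _ _,
        fun c x => real_inner_smul_right _ _ _⟩ M
    intro y hy
    rw [hC] at hy
    exact convexHull_min hM𝒞 hhalf hy
  -- radius bound
  obtain ⟨R₀, hR₀⟩ := hCbdd.subset_closedBall (0 : E)
  set R : ℝ := max R₀ 0 with hRdef
  have hR : ∀ x ∈ C, ‖x‖ ≤ R := by
    intro x hx
    have := hR₀ hx
    rw [mem_closedBall_zero_iff] at this
    exact this.trans (le_max_left _ _)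
  have hR0 : 0 ≤ R := le_max_right _ _
  have hib : ∀ (u u' x : E), ‖x‖ ≤ R → |⟪u, x⟫ - ⟪u', x⟫| ≤ ‖u - u'‖ * R := by
    intro u u' x hx
    rw [← inner_sub_left]
    exact (abs_real_inner_le_norm _ _).trans (mul_le_mul_of_nonneg_left hx (norm_nonneg _))
  -- convergence of the subsequence of max values
  have hmbound : ∀ k, |m (φ k) - M| ≤ ε (φ k) + ‖w (φ k) - wl‖ * R := by
    intro k
    have hxbC : xb (φ k) ∈ C := hAC _ (hxbF (φ k)).1
    have h1 : |⟪w (φ k), xb (φ k)⟫ - ⟪wl, xb (φ k)⟫| ≤ ‖w (φ k) - wl‖ * R :=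
      hib _ _ _ (hR _ hxbC)
    have h2 : ⟪wl, xb (φ k)⟫ ≤ M := hMC _ hxbC
    obtain ⟨a, ha𝒜, hanear⟩ := h𝒜approx (φ k) xs hxs𝒞
    have haC : a ∈ C := hAC _ (h𝒜A _ ha𝒜)
    have h3 : ⟪w (φ k), a⟫ ≤ m (φ k) := hmmax _ a (h𝒜A _ ha𝒜)
    have h4 : |⟪w (φ k), a⟫ - ⟪wl, a⟫| ≤ ‖w (φ k) - wl‖ * R := hib _ _ _ (hR _ haC)
    have h5 : |⟪wl, xs⟫ - ⟪wl, a⟫| ≤ ‖xs - a‖ := by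
      rw [← inner_sub_right]
      refine (abs_real_inner_le_norm _ _).trans ?_
      rw [hwl1, one_mul]
    have h6 : ‖xs - a‖ ≤ ε (φ k) := hanear
    have habs1 := abs_le.1 h1
    have habs4 := abs_le.1 h4
    have habs5 := abs_le.1 h5
    rw [abs_le]
    constructor
    · -- M - stuff ≤ m (φ k)
      have : M - ε (φ k) - ‖w (φ k) - wl‖ * R ≤ m (φ k) := by
        have := habs5.2
        have := habs4.1
        linarith
      linarith
    · -- m (φ k) ≤ M + stuff
      have hεk : 0 < ε (φ k) := hεpos _
      have : m (φ k) ≤ M + ‖w (φ k) - wl‖ * R := by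
        have := habs1.2
        simp only [hm] at *
        linarith
      linarith
  have hwnorm0 : Tendsto (fun k => ‖w (φ k) - wl‖) atTop (nhds 0) :=
    tendsto_iff_norm_sub_tendsto_zero.1 hwconv
  have hε0 : Tendsto (fun k => ε (φ k)) atTop (nhds 0) := hεlim.comp hφ.tendsto_atTop
  have hmlim : Tendsto (fun k => m (φ k)) atTop (nhds M) := by
    have hbnd : Tendsto (fun k => ε (φ k) + ‖w (φ k) - wl‖ * R) atTop (nhds 0) := by
      have := hε0.add (hwnorm0.mul_const R); simpa using this
    rw [tendsto_iff_dist_tendsto_zero]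
    refine squeeze_zero (fun k => dist_nonneg) (fun k => ?_) hbnd
    rw [Real.dist_eq]
    exact hmbound k
  -- the finite set S of curve points on the limiting hyperplane
  set S : Set E := 𝒞 ∩ {x | ⟪wl, x⟫ = M} with hS
  have hSfin : S.Finite := by
    have hne : innerSL ℝ wl ≠ 0 := by
      intro h0
      have : (innerSL ℝ wl) wl = 0 := by rw [h0]; rfl
      rw [innerSL_apply_apply, real_inner_self_eq_norm_mul_norm, hwl1] at this
      norm_num at this
    have := H3 (innerSL ℝ wl) M hne
    refine this.subset ?_
    intro x hx
    exact ⟨hx.1, by simpa [innerSL_apply_apply] using hx.2⟩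
  have hxsS : xs ∈ S := ⟨hxs𝒞, rfl⟩
  -- Hausdorff distance facts
  have hFbdd : ∀ ν, Bornology.IsBounded (F ν) := fun ν => hCbdd.subset (hFsubC ν)
  have hedist : ∀ ν, EMetric.hausdorffEdist (F ν) Flim ≠ ⊤ := fun ν =>
    Metric.hausdorffEdist_ne_top_of_nonempty_of_bounded (hFne ν) hFlne (hFbdd ν)
      hFlcpt.isBounded
  have hFcpt : ∀ ν, IsCompact (F ν) := fun ν => by
    rw [hFeq ν]; exact (hBfin ν).isCompact_convexHull ℝ
  have happrox : ∀ z ∈ Flim, ∀ ν, ∃ p ∈ F ν, dist z p ≤ hausdorffDist (F ν) Flim := by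
    intro z hz ν
    obtain ⟨p, hpF, hpd⟩ := (hFcpt ν).exists_infDist_eq_dist (hFne ν) z
    refine ⟨p, hpF, ?_⟩
    rw [← hpd]
    have h1 := Metric.infDist_le_hausdorffDist_of_mem hz
      (by rw [EMetric.hausdorffEdist_comm]; exact hedist ν)
    rw [Metric.hausdorffDist_comm] at h1
    exact h1
  have hφtend : Tendsto (fun k => hausdorffDist (F (φ k)) Flim) atTop (nhds 0) :=
    hFconv.comp hφ.tendsto_atTop
  -- limit points of the vertex sets B lie near S
  have hnear : ∀ δ : ℝ, 0 < δ → ∀ᶠ k in atTop, ∀ b ∈ B (φ k), ∃ s ∈ S, dist b s < δ := by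
    intro δ hδ
    by_contra hcon
    rw [Filter.not_eventually] at hcon
    have hcon' : ∃ᶠ k in atTop, ∃ b ∈ B (φ k), ∀ s ∈ S, δ ≤ dist b s := by
      refine hcon.mono fun k hk => ?_
      push_neg at hk
      obtain ⟨b, hb, h2⟩ := hk
      exact ⟨b, hb, fun s hs => h2 s hs⟩
    obtain ⟨ψ, hψ, hψP⟩ := Filter.extraction_of_frequently_atTop hcon'
    choose bb hbbB hbbfar using hψP
    have hbb𝒞 : ∀ j, bb j ∈ 𝒞 := fun j => h𝒜sub _ (hbbB j).1
    obtain ⟨bl, hbl𝒞, χ, hχ, hblim⟩ := h𝒞.tendsto_subseq hbb𝒞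
    have hwtend : Tendsto (fun i => w (φ (ψ (χ i)))) atTop (nhds wl) := by
      have := hwconv.comp ((hψ.comp hχ).tendsto_atTop)
      simpa [Function.comp_def] using this
    have hvals : Tendsto (fun i => ⟪w (φ (ψ (χ i))), bb (χ i)⟫) atTop (nhds ⟪wl, bl⟫) :=
      hwtend.inner hblim
    have hvals' : Tendsto (fun i => m (φ (ψ (χ i)))) atTop (nhds M) := by
      have := hmlim.comp ((hψ.comp hχ).tendsto_atTop)
      simpa [Function.comp_def] using this
    have heqv : ∀ i, ⟪w (φ (ψ (χ i))), bb (χ i)⟫ = m (φ (ψ (χ i))) := fun i => (hbbB (χ i)).2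
    have hblM : ⟪wl, bl⟫ = M := tendsto_nhds_unique (hvals.congr heqv) hvals'
    have hblS : bl ∈ S := ⟨hbl𝒞, hblM⟩
    have hfar : ∀ i, δ ≤ dist (bb (χ i)) bl := fun i => hbbfar (χ i) bl hblS
    have hdist0 : Tendsto (fun i => dist (bb (χ i)) bl) atTop (nhds 0) :=
      tendsto_iff_dist_tendsto_zero.1 hblim
    have : δ ≤ 0 := ge_of_tendsto hdist0 (Filter.Eventually.of_forall hfar)
    linarith
  -- the limit face is generated by T = S ∩ Flim
  set T : Set E := S ∩ Flim with hT
  have hTnear : ∀ δ : ℝ, 0 < δ → ∀ᶠ k in atTop, ∀ b ∈ B (φ k), ∃ s ∈ T, dist b s < δ := by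
    intro δ hδ
    obtain ⟨d, hd0, hdprop⟩ : ∃ d, 0 < d ∧ ∀ s ∈ S, infDist s Flim < d → s ∈ Flim := by
      by_cases hS' : (S \ Flim).Nonempty
      · set D := (fun s => infDist s Flim) '' (S \ Flim) with hD
        have hDfin : D.Finite := (hSfin.diff (t := Flim)).image _
        have hDne : D.Nonempty := hS'.image _
        have hDfne : hDfin.toFinset.Nonempty := by
          rwa [Set.Finite.toFinset_nonempty]
        set d := hDfin.toFinset.min' hDfne with hd
        have hdD : d ∈ D := by
          have := hDfin.toFinset.min'_mem hDfne
          rwa [Set.Finite.mem_toFinset] at this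
        obtain ⟨s0, hs0, hs0d⟩ := hdD
        refine ⟨d, ?_, ?_⟩
        · rw [← hs0d]
          exact (hFlcpt.isClosed.notMem_iff_infDist_pos hFlne).1 hs0.2
        · intro s hs hlt
          by_contra hsF
          have hmem : infDist s Flim ∈ D := ⟨s, ⟨hs, hsF⟩, rfl⟩
          have : d ≤ infDist s Flim := hDfin.toFinset.min'_le _ (by
            rwa [Set.Finite.mem_toFinset])
          linarith
      · refine ⟨1, one_pos, fun s hs hlt => ?_⟩
        by_contra h
        exact hS' ⟨s, hs, h⟩
    have h1 := hnear (min δ (d / 2)) (lt_min hδ (by linarith))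
    have h2 : ∀ᶠ k in atTop, hausdorffDist (F (φ k)) Flim < d / 2 :=
      hφtend.eventually (eventually_lt_nhds (by linarith : (0:ℝ) < d / 2))
    filter_upwards [h1, h2] with k hk1 hk2
    intro b hb
    obtain ⟨s, hsS, hsb⟩ := hk1 b hb
    have hbF : b ∈ F (φ k) := hBF _ hb
    have hbinf : infDist b Flim ≤ hausdorffDist (F (φ k)) Flim :=
      Metric.infDist_le_hausdorffDist_of_mem hbF (hedist _)
    have hsd : infDist s Flim < d := by
      have h3 : infDist s Flim ≤ infDist b Flim + dist s b :=
        Metric.infDist_le_infDist_add_dist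
      have h4 : dist s b < min δ (d / 2) := by rwa [dist_comm]
      have h5 : dist s b < d / 2 := lt_of_lt_of_le h4 (min_le_right _ _)
      linarith
    exact ⟨s, ⟨hsS, hdprop s hsS hsd⟩, lt_of_lt_of_le hsb (min_le_left _ _)⟩
  have hTne : T.Nonempty := by
    obtain ⟨k, hk⟩ := (hTnear 1 one_pos).exists
    obtain ⟨b, hb⟩ := hBne (φ k)
    obtain ⟨s, hsT, _⟩ := hk b hb
    exact ⟨s, hsT⟩
  have hTfin : T.Finite := hSfin.subset Set.inter_subset_left
  have hcvTcpt : IsCompact (convexHull ℝ T) := hTfin.isCompact_convexHull ℝ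
  have hcvTne : (convexHull ℝ T).Nonempty := convexHull_nonempty_iff.2 hTne
  -- Flim is convex
  have hFlconvex : Convex ℝ Flim := by
    intro x hx y hy a b ha hb hab
    have hbound : ∀ ν, infDist (a • x + b • y) Flim ≤ 2 * hausdorffDist (F ν) Flim := by
      intro ν
      obtain ⟨px, hpxF, hpxd⟩ := happrox x hx ν
      obtain ⟨py, hpyF, hpyd⟩ := happrox y hy ν
      have hmem : a • px + b • py ∈ F ν := hFcv ν hpxF hpyF ha hb hab
      have h1 : infDist (a • x + b • y) Flim ≤
          infDist (a • px + b • py) Flim + dist (a • x + b • y) (a • px + b • py) :=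
        Metric.infDist_le_infDist_add_dist
      have h2 : infDist (a • px + b • py) Flim ≤ hausdorffDist (F ν) Flim :=
        Metric.infDist_le_hausdorffDist_of_mem hmem (hedist ν)
      have h3 : dist (a • x + b • y) (a • px + b • py) ≤ a * dist x px + b * dist y py :=
        combo_dist_aux _ _ _ _ ha hb
      have h4 : a * dist x px ≤ a * hausdorffDist (F ν) Flim := by
        apply mul_le_mul_of_nonneg_left _ ha
        rw [dist_comm] at hpxd ⊢
        exact hpxd
      have h5 : b * dist y py ≤ b * hausdorffDist (F ν) Flim := by
        apply mul_le_mul_of_nonneg_left _ hb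
        rw [dist_comm] at hpyd ⊢
        exact hpyd
      have h6 : a * hausdorffDist (F ν) Flim + b * hausdorffDist (F ν) Flim
          = hausdorffDist (F ν) Flim := by
        rw [← add_mul, hab, one_mul]
      linarith
    have htend2 : Tendsto (fun ν => 2 * hausdorffDist (F ν) Flim) atTop (nhds 0) := by
      have := hFconv.const_mul 2
      simpa using this
    have h0 : infDist (a • x + b • y) Flim ≤ 0 :=
      ge_of_tendsto htend2 (Filter.Eventually.of_forall hbound)
    have h0' : infDist (a • x + b • y) Flim = 0 := le_antisymm h0 Metric.infDist_nonneg
    exact (hFlcpt.isClosed.mem_iff_infDist_zero hFlne).2 h0'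
  -- Flim ⊆ conv T
  have hFlsub : Flim ⊆ convexHull ℝ T := by
    intro z hz
    have hinf0 : ∀ δ : ℝ, 0 < δ → infDist z (convexHull ℝ T) ≤ 2 * δ := by
      intro δ hδ
      have h1 := hTnear δ hδ
      have h2 : ∀ᶠ k in atTop, hausdorffDist (F (φ k)) Flim < δ :=
        hφtend.eventually (eventually_lt_nhds hδ)
      obtain ⟨k, hk1, hk2⟩ := (h1.and h2).exists
      obtain ⟨p, hpF, hpd⟩ := happrox z hz (φ k)
      have hDcx : Convex ℝ {x : E | infDist x (convexHull ℝ T) ≤ δ} := by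
        intro x hx y hy a b ha hb hab
        show infDist (a • x + b • y) (convexHull ℝ T) ≤ δ
        refine le_of_forall_pos_le_add fun η hη => ?_
        have hxlt : infDist x (convexHull ℝ T) < δ + η := lt_of_le_of_lt hx (by linarith)
        have hylt : infDist y (convexHull ℝ T) < δ + η := lt_of_le_of_lt hy (by linarith)
        obtain ⟨px, hpx, hdx⟩ := (Metric.infDist_lt_iff hcvTne).1 hxlt
        obtain ⟨py, hpy, hdy⟩ := (Metric.infDist_lt_iff hcvTne).1 hylt
        have hmem := (convex_convexHull ℝ T) hpx hpy ha hb hab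
        have hle := Metric.infDist_le_dist_of_mem hmem (x := a • x + b • y)
        have hcd : dist (a • x + b • y) (a • px + b • py) ≤ a * dist x px + b * dist y py :=
          combo_dist_aux _ _ _ _ ha hb
        have h4 : a * dist x px ≤ a * (δ + η) :=
          mul_le_mul_of_nonneg_left hdx.le ha
        have h5 : b * dist y py ≤ b * (δ + η) :=
          mul_le_mul_of_nonneg_left hdy.le hb
        have h6 : a * (δ + η) + b * (δ + η) = δ + η := by rw [← add_mul, hab, one_mul]
        linarith
      have hpD : infDist p (convexHull ℝ T) ≤ δ := by
        have hsub2 : B (φ k) ⊆ {x : E | infDist x (convexHull ℝ T) ≤ δ} := by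
          intro b hb
          obtain ⟨s, hsT, hbs⟩ := hk1 b hb
          have := Metric.infDist_le_dist_of_mem (subset_convexHull ℝ T hsT) (x := b)
          exact le_trans this hbs.le
        have hsub3 := convexHull_min hsub2 hDcx
        have hpB : p ∈ convexHull ℝ (B (φ k)) := by rw [← hFeq]; exact hpF
        exact hsub3 hpB
      have h7 : infDist z (convexHull ℝ T) ≤ infDist p (convexHull ℝ T) + dist z p :=
        Metric.infDist_le_infDist_add_dist
      have h8 : dist z p ≤ δ := hpd.trans hk2.le
      linarith
    have h0 : infDist z (convexHull ℝ T) ≤ 0 := by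
      refine le_of_forall_pos_le_add fun η hη => ?_
      have := hinf0 (η / 2) (by linarith)
      linarith
    have h0' : infDist z (convexHull ℝ T) = 0 := le_antisymm h0 Metric.infDist_nonneg
    exact (hcvTcpt.isClosed.mem_iff_infDist_zero hcvTne).2 h0'
  have hFlimT : Flim = convexHull ℝ T :=
    Set.Subset.antisymm hFlsub (convexHull_min (fun t ht => ht.2) hFlconvex)
  -- the limiting exposed face G of C
  set G : Set E := C ∩ {x | ⟪wl, x⟫ = M} with hG
  have hSsubG : S ⊆ G := fun s hs => ⟨by rw [hC]; exact subset_convexHull ℝ 𝒞 hs.1, hs.2⟩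
  have hlin : IsLinearMap ℝ (fun y : E => ⟪wl, y⟫) :=
    ⟨fun a b => inner_add_right _ _ _, fun c x => by simp [real_inner_smul_right]⟩
  have hGconv : Convex ℝ G := hCconv.inter (convex_hyperplane hlin M)
  have hGS : G = convexHull ℝ S := by
    refine Set.Subset.antisymm ?_ (convexHull_min hSsubG hGconv)
    rintro x ⟨hxC, hxM⟩
    have hcut := face_cut_aux 𝒞 (fun y => ⟪wl, y⟫)
      (fun a b x' y' => by
        show ⟪wl, a • x' + b • y'⟫ = _
        rw [inner_add_right, real_inner_smul_right, real_inner_smul_right])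
      M hM𝒞 (by rw [← hC]; exact hxC) hxM
    exact hcut
  have hGexp : IsExposed ℝ C G := by
    intro _
    refine ⟨innerSL ℝ wl, ?_⟩
    ext x
    simp only [hG, Set.mem_inter_iff, Set.mem_setOf_eq, innerSL_apply_apply]
    constructor
    · rintro ⟨hxC, hxM⟩
      exact ⟨hxC, fun y hy => (hMC y hy).trans_eq hxM.symm⟩
    · rintro ⟨hxC, hmax⟩
      refine ⟨hxC, le_antisymm (hMC x hxC) ?_⟩
      have hxsC : xs ∈ C := by rw [hC]; exact subset_convexHull ℝ 𝒞 hxs𝒞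
      exact hmax xs hxsC
  have hGext : IsExtreme ℝ C G := hGexp.isExtreme
  have hGfr : G ⊆ frontier C := by
    rintro x ⟨hxC, hxM⟩
    have hnotint : x ∉ interior C := by
      intro hxint
      rw [mem_interior_iff_mem_nhds, Metric.mem_nhds_iff] at hxint
      obtain ⟨r, hr0, hball⟩ := hxint
      have hdist : dist (x + (r / 2) • wl) x = r / 2 := by
        rw [dist_eq_norm, add_sub_cancel_left, norm_smul, hwl1, mul_one,
          Real.norm_eq_abs, abs_of_pos (by linarith)]
      have hmem : x + (r / 2) • wl ∈ C := hball (by rw [Metric.mem_ball, hdist]; linarith)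
      have hle := hMC _ hmem
      rw [inner_add_right, real_inner_smul_right, real_inner_self_eq_norm_mul_norm,
        hwl1, hxM] at hle
      nlinarith
    rw [frontier, Set.mem_diff]
    exact ⟨subset_closure hxC, hnotint⟩
  have hSext : S ⊆ Set.extremePoints ℝ C := fun s hs => H1 s hs.1 (hGfr (hSsubG hs))
  obtain ⟨V, hVfin, hVind, hGV⟩ := H2 G hGext ⟨S, hSfin, hGS⟩
  have hTS : T ⊆ S := Set.inter_subset_left
  have hTV : T ⊆ V := by
    intro t ht
    have htG : t ∈ G := hSsubG (hTS ht)
    have htext : t ∈ Set.extremePoints ℝ C := hSext (hTS ht)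
    have htextG : t ∈ Set.extremePoints ℝ (convexHull ℝ V) := by
      rw [← hGV]
      exact ⟨htG, fun x1 hx1 x2 hx2 hseg => htext.2 (hGext.1 hx1) (hGext.1 hx2) hseg⟩
    exact extremePoints_convexHull_subset htextG
  refine ⟨hFlne, ?_, ?_⟩
  · have h1 : IsExtreme ℝ C (convexHull ℝ V) := by rw [← hGV]; exact hGext
    have h2 := simplex_face_aux hVfin hVind hTV
    rw [hFlimT]
    exact h1.trans h2
  · intro heq
    have hWne : ∃ x ∈ C, ⟪wl, x⟫ ≠ M := by
      by_contra hall
      push_neg at hall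
      set f : E →ₗ[ℝ] ℝ :=
        { toFun := fun x => ⟪wl, x⟫
          map_add' := fun a b => inner_add_right _ _ _
          map_smul' := fun c x => by simp [real_inner_smul_right] } with hf
      have hle : vectorSpan ℝ C ≤ LinearMap.ker f := by
        rw [vectorSpan_def]
        apply Submodule.span_le.2
        rintro d hd
        rw [Set.mem_vsub] at hd
        obtain ⟨p, hp, q, hq, rfl⟩ := hd
        simp only [SetLike.mem_coe, LinearMap.mem_ker]
        show ⟪wl, p -ᵥ q⟫ = 0
        rw [vsub_eq_sub, inner_sub_right, hall p hp, hall q hq, sub_self]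
      have h0 := hle hwlW
      rw [LinearMap.mem_ker] at h0
      have h1 : ⟪wl, wl⟫ = (0 : ℝ) := h0
      rw [real_inner_self_eq_norm_mul_norm, hwl1] at h1
      norm_num at h1
    obtain ⟨x, hxC, hxne⟩ := hWne
    have hxFl : x ∈ Flim := heq ▸ hxC
    have hxT : x ∈ convexHull ℝ T := hFlimT ▸ hxFl
    have hTsubhyp : T ⊆ {y : E | ⟪wl, y⟫ = M} := fun t ht => (hTS ht).2
    exact hxne (convexHull_min hTsubhyp (convex_hyperplane hlin M) hxT)


/-- Let `𝒞` be compact in `ℝⁿ` with `C = conv 𝒞` satisfying (H1), (H2),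
(H3).  Let `ε ν ↘ 0`, `𝒜 ν ⊆ 𝒞` be `ε ν`-approximations and `A ν = conv (𝒜 ν)`.  If a
sequence of nonempty proper exposed faces `F ν` of the polytopes `A ν` converges in
Hausdorff distance to a set `Flim`, then `Flim` is a proper face of `C`, i.e. a nonempty
convex extreme subset of `C` different from `C`. -/
theorem hausdorff_limit_of_exposed_faces_is_proper_face
    (n : ℕ) (𝒞 : Set (EuclideanSpace ℝ (Fin n))) (h𝒞 : IsCompact 𝒞)
    (C : Set (EuclideanSpace ℝ (Fin n))) (hC : C = convexHull ℝ 𝒞)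
    -- (H1): every curve point on the boundary of `C` is an extreme point of `C`
    (H1 : ∀ x ∈ 𝒞, x ∈ frontier C → x ∈ Set.extremePoints ℝ C)
    -- (H2): every face of `C` that is a polytope is a simplex
    (H2 : ∀ G : Set (EuclideanSpace ℝ (Fin n)), IsExtreme ℝ C G →
      (∃ V : Set (EuclideanSpace ℝ (Fin n)), V.Finite ∧ G = convexHull ℝ V) →
      ∃ V : Set (EuclideanSpace ℝ (Fin n)), V.Finite ∧
        AffineIndependent ℝ ((↑) : V → EuclideanSpace ℝ (Fin n)) ∧ G = convexHull ℝ V)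
    -- (H3): every hyperplane meets `𝒞` in a finite set
    (H3 : ∀ (l : EuclideanSpace ℝ (Fin n) →L[ℝ] ℝ) (c : ℝ), l ≠ 0 →
      (𝒞 ∩ {x | l x = c}).Finite)
    (ε : ℕ → ℝ) (hεpos : ∀ ν, 0 < ε ν) (hεanti : StrictAnti ε)
    (hεlim : Filter.Tendsto ε Filter.atTop (nhds 0))
    (𝒜 : ℕ → Set (EuclideanSpace ℝ (Fin n)))
    (h𝒜fin : ∀ ν, (𝒜 ν).Finite) (h𝒜sub : ∀ ν, 𝒜 ν ⊆ 𝒞)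
    (h𝒜approx : ∀ ν, ∀ y ∈ 𝒞, ∃ x ∈ 𝒜 ν, ‖y - x‖ ≤ ε ν)
    (A : ℕ → Set (EuclideanSpace ℝ (Fin n)))
    (hA : ∀ ν, A ν = convexHull ℝ (𝒜 ν))
    (F : ℕ → Set (EuclideanSpace ℝ (Fin n)))
    (hFne : ∀ ν, (F ν).Nonempty)
    (hFexp : ∀ ν, IsExposed ℝ (A ν) (F ν))
    (hFprop : ∀ ν, F ν ≠ A ν)
    (Flim : Set (EuclideanSpace ℝ (Fin n)))
    (hFlne : Flim.Nonempty) (hFlcpt : IsCompact Flim)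
    (hFconv : Filter.Tendsto (fun ν => Metric.hausdorffDist (F ν) Flim)
      Filter.atTop (nhds 0)) :
    Flim.Nonempty ∧ IsExtreme ℝ C Flim ∧ Flim ≠ C := by
  exact main_aux 𝒞 h𝒞 C hC H1 H2 H3 ε hεpos hεlim 𝒜 h𝒜fin h𝒜sub h𝒜approx A hA
    F hFne hFexp hFprop Flim hFlne hFlcpt hFconv
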